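/- Fix b > 0 and a finite multiset z of points in ℝ. For each sub-multiset w, let B_w = [c(w) − |w|·b, c(w) + |w|·b] where c(w) is the mean of w and |w| its cardinality. Say z is well contained in B_z if for any consecutive sub-multiset z' ⊆ z (points that are consecutive in the ordering of z), B_{z'} ⊆ B_z. If z is well contained in B_z, then for any decomposition z = z₁ + ... + z_m into nonempty parts with m ≥ 2, some pair of boxes B_{z_i}, B_{z_j} (i ≠ j) intersect. -/

import Mathlib

/-- The mean of the points of `x` indexed by `S`. -/
noncomputable def bmean {n : ℕ} (x : Fin n → ℝ) (S : Finset (Fin n)) : ℝ :=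
  (∑ i ∈ S, x i) / S.card

/-- The box of a sub-collection: the closed interval of radius `|S| * b` around its mean. -/
noncomputable def bbox {n : ℕ} (b : ℝ) (x : Fin n → ℝ) (S : Finset (Fin n)) : Set ℝ :=
  Set.Icc (bmean x S - S.card * b) (bmean x S + S.card * b)


lemma fin_le_apply {k n : ℕ} {f : Fin k → Fin n} (hf : StrictMono f) (j : Fin k) :
    (j : ℕ) ≤ (f j : ℕ) := by
  have H : ∀ p : ℕ, ∀ h : p < k, p ≤ (f ⟨p, h⟩ : ℕ) := by
    intro p
    induction p with
    | zero => intro h; exact Nat.zero_le _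
    | succ q ih =>
      intro h
      have hq : q < k := by omega
      have h1 := ih hq
      have h2 : f ⟨q, hq⟩ < f ⟨q + 1, h⟩ := hf (by simp [Fin.lt_def])
      rw [Fin.lt_def] at h2
      omega
  simpa using H j.1 j.2

lemma fin_apply_le {k n : ℕ} {f : Fin k → Fin n} (hf : StrictMono f) (j : Fin k) :
    (f j : ℕ) ≤ n - k + j := by
  have hk : 0 < k := j.pos
  have hn : 0 < n := (f j).pos
  have hg : StrictMono (fun j : Fin k => (f j.rev).rev) := by
    intro a b hab
    have : b.rev < a.rev := by
      rw [Fin.rev_lt_rev]; exact hab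
    have := hf this
    rwa [Fin.rev_lt_rev]
  have := fin_le_apply hg j.rev
  simp only [Fin.rev_rev, Fin.val_rev] at this
  have hfj : (f j : ℕ) < n := (f j).2
  have hjk : (j : ℕ) < k := j.2
  omega

lemma sum_emb {n k : ℕ} (x : Fin n → ℝ) (S : Finset (Fin n)) (hS : S.card = k) :
    ∑ i ∈ S, x i = ∑ j : Fin k, x (S.orderEmbOfFin hS j) := by
  rw [← Finset.sum_coe_sort S x]
  exact (Fintype.sum_equiv (S.orderIsoOfFin hS).toEquiv _ _ (fun j => by
    simp [Finset.coe_orderIsoOfFin_apply])).symm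

lemma sum_mono_emb {n k : ℕ} {x : Fin n → ℝ} (hx : Monotone x) (S T : Finset (Fin n))
    (hS : S.card = k) (hT : T.card = k)
    (h : ∀ j : Fin k, S.orderEmbOfFin hS j ≤ T.orderEmbOfFin hT j) :
    ∑ i ∈ S, x i ≤ ∑ i ∈ T, x i := by
  rw [sum_emb x S hS, sum_emb x T hT]
  exact Finset.sum_le_sum fun j _ => hx (h j)

lemma box_subset {n : ℕ} (b : ℝ) (hb : 0 < b) (x : Fin n → ℝ) (hx : Monotone x)
    (hwc : ∀ s t : Fin n, s ≤ t → bbox b x (Finset.Icc s t) ⊆ bbox b x Finset.univ)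
    (S : Finset (Fin n)) (hSne : S.Nonempty) :
    bbox b x S ⊆ bbox b x Finset.univ := by
  set k := S.card with hk
  have hk1 : 1 ≤ k := hSne.card_pos
  have hkn : k ≤ n := by
    have := Finset.card_le_univ S
    simpa using this
  have hn : 0 < n := lt_of_lt_of_le hk1 hkn
  set L : Finset (Fin n) := Finset.Icc ⟨0, hn⟩ ⟨k - 1, by omega⟩ with hLdef
  set H : Finset (Fin n) := Finset.Icc ⟨n - k, by omega⟩ ⟨n - 1, by omega⟩ with hHdef
  have hL : L.card = k := by rw [hLdef, Fin.card_Icc]; simp; omega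
  have hH : H.card = k := by rw [hHdef, Fin.card_Icc]; simp; omega
  have hLval : ∀ j : Fin k, (L.orderEmbOfFin hL j : ℕ) = (j : ℕ) := by
    intro j
    have hub : ∀ j : Fin k, (L.orderEmbOfFin hL j : ℕ) ≤ k - 1 := by
      intro j
      have hm := Finset.mem_Icc.mp (Finset.orderEmbOfFin_mem L hL j)
      have h2 := hm.2
      rw [Fin.le_def] at h2
      exact h2
    set f' : Fin k → Fin k := fun j => ⟨(L.orderEmbOfFin hL j : ℕ), by
      have := hub j; omega⟩ with hf'
    have hsm : StrictMono f' := by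
      intro a c hac
      show (⟨_, _⟩ : Fin k) < ⟨_, _⟩
      rw [Fin.mk_lt_mk]
      exact Fin.lt_def.mp ((L.orderEmbOfFin hL).strictMono hac)
    have h1 := fin_le_apply hsm j
    have h2 := fin_apply_le hsm j
    simp [hf'] at h1 h2
    omega
  have hHval : ∀ j : Fin k, (H.orderEmbOfFin hH j : ℕ) = n - k + (j : ℕ) := by
    intro j
    have hlb : ∀ j : Fin k, n - k ≤ (H.orderEmbOfFin hH j : ℕ) ∧
        (H.orderEmbOfFin hH j : ℕ) ≤ n - 1 := by
      intro j
      have hm := Finset.mem_Icc.mp (Finset.orderEmbOfFin_mem H hH j)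
      have h1 := hm.1
      have h2 := hm.2
      rw [Fin.le_def] at h1 h2
      exact ⟨h1, h2⟩
    set f' : Fin k → Fin k := fun j => ⟨(H.orderEmbOfFin hH j : ℕ) - (n - k), by
      have := hlb j; omega⟩ with hf'
    have hsm : StrictMono f' := by
      intro a c hac
      have := (H.orderEmbOfFin hH).strictMono hac
      rw [Fin.lt_def] at this
      show (⟨_, _⟩ : Fin k) < ⟨_, _⟩
      rw [Fin.mk_lt_mk]
      have h1 := hlb a
      omega
    have h1 := fin_le_apply hsm j
    have h2 := fin_apply_le hsm j
    have h3 := hlb j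
    simp [hf'] at h1 h2
    omega
  have hsumL : ∑ i ∈ L, x i ≤ ∑ i ∈ S, x i := by
    apply sum_mono_emb hx L S hL hk.symm
    intro j
    rw [Fin.le_def, hLval j]
    exact fin_le_apply (S.orderEmbOfFin hk.symm).strictMono j
  have hsumH : ∑ i ∈ S, x i ≤ ∑ i ∈ H, x i := by
    apply sum_mono_emb hx S H hk.symm hH
    intro j
    rw [Fin.le_def, hHval j]
    exact fin_apply_le (S.orderEmbOfFin hk.symm).strictMono j
  have hkpos : (0 : ℝ) < (k : ℝ) := by exact_mod_cast hk1
  have hmeanL : bmean x L ≤ bmean x S := by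
    unfold bmean
    rw [hL, ← hk]
    exact (div_le_div_iff_of_pos_right hkpos).mpr hsumL
  have hmeanH : bmean x S ≤ bmean x H := by
    unfold bmean
    rw [hH, ← hk]
    exact (div_le_div_iff_of_pos_right hkpos).mpr hsumH
  have hleL : (⟨0, hn⟩ : Fin n) ≤ ⟨k - 1, by omega⟩ := by
    rw [Fin.le_def]; exact Nat.zero_le _
  have hleH : (⟨n - k, by omega⟩ : Fin n) ≤ ⟨n - 1, by omega⟩ := by
    rw [Fin.le_def]; simp; omega
  have hBL : bbox b x L ⊆ bbox b x Finset.univ := hwc _ _ hleL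
  have hBH : bbox b x H ⊆ bbox b x Finset.univ := hwc _ _ hleH
  have hcb : (0 : ℝ) ≤ (k : ℝ) * b := mul_nonneg (Nat.cast_nonneg k) hb.le
  unfold bbox at hBL hBH ⊢
  rw [hL] at hBL
  rw [hH] at hBH
  rw [Set.Icc_subset_Icc_iff (by linarith)] at hBL
  rw [Set.Icc_subset_Icc_iff (by linarith)] at hBH
  rw [← hk]
  apply Set.Icc_subset_Icc
  · linarith [hBL.1, hmeanL]
  · linarith [hBH.2, hmeanH]

open MeasureTheory in
/-- No-splitting lemma: if a multiset of points in `ℝ` (sorted as a monotone tuple `x`) is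
well contained in its box (every consecutive sub-multiset's box is contained in the total
box), then any decomposition into `m ≥ 2` nonempty parts has two parts whose boxes meet. -/
theorem no_splitting {n : ℕ} (b : ℝ) (hb : 0 < b) (x : Fin n → ℝ) (hx : Monotone x)
    (hwc : ∀ s t : Fin n, s ≤ t → bbox b x (Finset.Icc s t) ⊆ bbox b x Finset.univ)
    (m : ℕ) (hm : 2 ≤ m) (P : Fin m → Finset (Fin n))
    (hPne : ∀ i, (P i).Nonempty)
    (hPdisj : ∀ i j, i ≠ j → Disjoint (P i) (P j))
    (hPcover : ∀ a : Fin n, ∃ i, a ∈ P i) :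
    ∃ i j, i ≠ j ∧ (bbox b x (P i) ∩ bbox b x (P j)).Nonempty := by

  by_contra hcon
  have hdisjset : ∀ i j : Fin m, i ≠ j → Disjoint (bbox b x (P i)) (bbox b x (P j)) := by
    intro i j h
    by_contra hd
    exact hcon ⟨i, j, h, Set.not_disjoint_iff_nonempty_inter.mp hd⟩
  set i0 : Fin m := ⟨0, by omega⟩ with hi0
  set i1 : Fin m := ⟨1, by omega⟩ with hi1
  obtain ⟨a0, ha0⟩ := hPne i0
  have hn : 0 < n := a0.pos
  have hcardu : (Finset.univ : Finset (Fin n)).card = n := by simp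
  have hcards : ∑ i, (P i).card = n := by
    have hbu : Finset.univ.biUnion P = Finset.univ := by
      apply Finset.eq_univ_iff_forall.mpr
      intro a
      obtain ⟨i, hi⟩ := hPcover a
      exact Finset.mem_biUnion.mpr ⟨i, Finset.mem_univ i, hi⟩
    calc ∑ i, (P i).card = (Finset.univ.biUnion P).card :=
          (Finset.card_biUnion (fun i _ j _ hij => hPdisj i j hij)).symm
      _ = n := by rw [hbu, hcardu]
  have hsub : ∀ i, bbox b x (P i) ⊆ bbox b x Finset.univ :=
    fun i => box_subset b hb x hx hwc (P i) (hPne i)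
  set U := ⋃ i, bbox b x (P i) with hU
  have hvol : volume U = ENNReal.ofReal (2 * n * b) := by
    rw [hU, measure_iUnion (fun i j hij => hdisjset i j hij) (fun i => measurableSet_Icc),
      tsum_fintype]
    have heach : ∀ i : Fin m, volume (bbox b x (P i)) =
        ENNReal.ofReal (2 * ((P i).card : ℝ) * b) := by
      intro i
      unfold bbox
      rw [Real.volume_Icc]
      congr 1
      ring
    rw [Finset.sum_congr rfl (fun i _ => heach i),
      ← ENNReal.ofReal_sum_of_nonneg (fun i _ => by positivity)]
    congr 1
    rw [← Finset.sum_mul, ← Finset.mul_sum, ← Nat.cast_sum, hcards]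
  have hvolI : volume (bbox b x Finset.univ) = ENNReal.ofReal (2 * n * b) := by
    unfold bbox
    rw [Real.volume_Icc, hcardu]
    congr 1
    ring
  have hUsub : U ⊆ bbox b x Finset.univ := Set.iUnion_subset hsub
  have hUclosed : IsClosed U := isClosed_iUnion_of_finite (fun i => isClosed_Icc)
  have hdiff : volume (bbox b x Finset.univ \ U) = 0 := by
    rw [measure_diff hUsub hUclosed.measurableSet.nullMeasurableSet
      (by rw [hvol]; exact ENNReal.ofReal_ne_top), hvol, hvolI, tsub_self]
  have hIeq : bbox b x Finset.univ =
      Set.Icc (bmean x Finset.univ - n * b) (bmean x Finset.univ + n * b) := by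
    unfold bbox
    rw [hcardu]
  have hnb : (0 : ℝ) < n * b := by
    have : (1 : ℝ) ≤ (n : ℝ) := by exact_mod_cast hn
    nlinarith
  have hab : bmean x Finset.univ - n * b < bmean x Finset.univ + n * b := by linarith
  have hIoo : Set.Ioo (bmean x Finset.univ - n * b) (bmean x Finset.univ + n * b) ⊆ U := by
    by_contra hns
    obtain ⟨p, hp, hpU⟩ := Set.not_subset.mp hns
    have hopen : IsOpen (Set.Ioo (bmean x Finset.univ - n * b) (bmean x Finset.univ + n * b) ∩ Uᶜ) :=
      isOpen_Ioo.inter hUclosed.isOpen_compl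
    have hpos := hopen.measure_pos volume ⟨p, hp, hpU⟩
    have hle : volume (Set.Ioo (bmean x Finset.univ - n * b) (bmean x Finset.univ + n * b) ∩ Uᶜ)
        ≤ volume (bbox b x Finset.univ \ U) := by
      apply measure_mono
      intro y hy
      exact ⟨hIeq ▸ Set.Ioo_subset_Icc_self hy.1, hy.2⟩
    rw [hdiff] at hle
    exact absurd (le_antisymm hle zero_le) hpos.ne'
  have hIcc : bbox b x Finset.univ ⊆ U := by
    rw [hIeq, ← closure_Ioo (ne_of_lt hab)]
    calc closure (Set.Ioo (bmean x Finset.univ - n * b) (bmean x Finset.univ + n * b))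
        ⊆ closure U := closure_mono hIoo
      _ = U := hUclosed.closure_eq
  set t : Set ℝ := bbox b x (P i0) with ht_def
  set t' : Set ℝ := ⋃ i : {i : Fin m // i ≠ i0}, bbox b x (P i.1) with ht'_def
  have ht : IsClosed t := isClosed_Icc
  have ht' : IsClosed t' := isClosed_iUnion_of_finite (fun i => isClosed_Icc)
  have hcover : bbox b x Finset.univ ⊆ t ∪ t' := by
    intro y hy
    obtain ⟨s, ⟨i, rfl⟩, hys⟩ := hIcc hy
    rcases eq_or_ne i i0 with h | h
    · exact Or.inl (show y ∈ bbox b x (P i0) from h ▸ hys)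
    · exact Or.inr (Set.mem_iUnion.mpr ⟨⟨i, h⟩, hys⟩)
  have hmem : ∀ i, bmean x (P i) ∈ bbox b x (P i) := by
    intro i
    have h0 : (0 : ℝ) ≤ ((P i).card : ℝ) * b := mul_nonneg (Nat.cast_nonneg _) hb.le
    exact Set.mem_Icc.mpr ⟨by linarith, by linarith⟩
  have hpc : IsPreconnected (bbox b x Finset.univ) := by
    rw [hIeq]; exact isPreconnected_Icc
  obtain ⟨y, _, hyt, hyt'⟩ := isPreconnected_closed_iff.mp hpc t t' ht ht' hcover
    ⟨bmean x (P i0), hsub i0 (hmem i0), hmem i0⟩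
    ⟨bmean x (P i1), hsub i1 (hmem i1),
      Set.mem_iUnion.mpr ⟨⟨i1, by rw [hi0, hi1]; exact Fin.ne_of_val_ne (by norm_num)⟩, hmem i1⟩⟩
  obtain ⟨⟨i, hine⟩, hyi⟩ := Set.mem_iUnion.mp hyt'
  exact Set.disjoint_iff.mp (hdisjset i0 i (Ne.symm hine)) ⟨hyt, hyi⟩
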